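/- Suppose (w, b) together with multipliers α satisfies the soft margin KKT conditions at cost C > 0. Then ‖w‖ ≤ n₊ * C * D, where n₊ = |I₊| and D is the two-class diameter. -/

import Mathlib

open scoped RealInnerProductSpace BigOperators

variable {E : Type*} [NormedAddCommGroup E] [InnerProductSpace ℝ E]

/-- The two-class diameter. -/
noncomputable def twoClassDiam {n : ℕ} (x : Fin n → E) (y : Fin n → ℝ) : ℝ :=
  sSup {d : ℝ | ∃ i j, y i = 1 ∧ y j = -1 ∧ d = ‖x i - x j‖}

open Classical in
/-- The index set of the positive class. -/
noncomputable def posSet {n : ℕ} (y : Fin n → ℝ) : Finset (Fin n) :=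
  Finset.univ.filter (fun i => y i = 1)

open Classical in
/-- The index set of the negative class. -/
noncomputable def negSet {n : ℕ} (y : Fin n → ℝ) : Finset (Fin n) :=
  Finset.univ.filter (fun i => y i = -1)

/-- The soft margin KKT conditions at cost `C` for `(w, b)` with multipliers `α`. -/
def SoftKKT {n : ℕ} (x : Fin n → E) (y : Fin n → ℝ) (C : ℝ) (w : E) (b : ℝ)
    (α : Fin n → ℝ) : Prop :=
  (∀ i, 0 ≤ α i ∧ α i ≤ C) ∧
  w = (∑ i ∈ posSet y, α i • x i) - (∑ i ∈ negSet y, α i • x i) ∧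
  (∑ i ∈ posSet y, α i) = (∑ i ∈ negSet y, α i) ∧
  (∀ i, α i < C → 1 ≤ y i * (⟪w, x i⟫ + b)) ∧
  (∀ i, y i * (⟪w, x i⟫ + b) < 1 → α i = C) ∧
  (∀ i, 0 < α i → y i * (⟪w, x i⟫ + b) ≤ 1)

theorem soft_margin_norm_bound {n : ℕ} (x : Fin n → E) (y : Fin n → ℝ)
    (hy : ∀ i, y i = 1 ∨ y i = -1)
    (hpos : ∃ i, y i = 1) (hneg : ∃ i, y i = -1)
    (C : ℝ) (hC : 0 < C) (w : E) (b : ℝ) (α : Fin n → ℝ)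
    (hkkt : SoftKKT x y C w b α) :
    ‖w‖ ≤ ((posSet y).card : ℝ) * C * twoClassDiam x y := by
  classical
  obtain ⟨hbox, hw, heq, -, -, -⟩ := hkkt
  set P := posSet y with hP
  set N := negSet y with hN
  set D := twoClassDiam x y with hD
  -- the set defining D is finite and nonempty
  have hbdd : BddAbove {d : ℝ | ∃ i j, y i = 1 ∧ y j = -1 ∧ d = ‖x i - x j‖} := by
    have hfin : ({d : ℝ | ∃ i j, y i = 1 ∧ y j = -1 ∧ d = ‖x i - x j‖}).Finite := by
      apply Set.Finite.subset (Set.finite_range (fun p : Fin n × Fin n => ‖x p.1 - x p.2‖))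
      rintro d ⟨i, j, -, -, rfl⟩
      exact ⟨(i, j), rfl⟩
    exact hfin.bddAbove
  have hDub : ∀ i j, y i = 1 → y j = -1 → ‖x i - x j‖ ≤ D := fun i j hi hj =>
    le_csSup hbdd ⟨i, j, hi, hj, rfl⟩
  have hD0 : 0 ≤ D := by
    obtain ⟨i, hi⟩ := hpos
    obtain ⟨j, hj⟩ := hneg
    exact le_trans (norm_nonneg _) (hDub i j hi hj)
  set S := ∑ i ∈ P, α i with hS
  have hS0 : 0 ≤ S := Finset.sum_nonneg fun i _ => (hbox i).1
  have hSle : S ≤ (P.card : ℝ) * C := by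
    calc S ≤ ∑ _i ∈ P, C := Finset.sum_le_sum fun i _ => (hbox i).2
    _ = (P.card : ℝ) * C := by simp [mul_comm]
  rcases eq_or_lt_of_le hS0 with hSz | hSpos
  · -- all multipliers vanish, so w = 0
    have hzP : ∀ i ∈ P, α i = 0 := by
      intro i hi
      have := (Finset.sum_eq_zero_iff_of_nonneg (fun i _ => (hbox i).1)).mp hSz.symm
      exact this i hi
    have hzN : ∀ i ∈ N, α i = 0 := by
      intro i hi
      have hNz : ∑ i ∈ N, α i = 0 := by rw [← heq]; exact hSz.symm
      exact (Finset.sum_eq_zero_iff_of_nonneg (fun i _ => (hbox i).1)).mp hNz i hi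
    have : w = 0 := by
      rw [hw, Finset.sum_eq_zero (fun i hi => by rw [hzP i hi, zero_smul]),
        Finset.sum_eq_zero (fun i hi => by rw [hzN i hi, zero_smul]), sub_zero]
    rw [this, norm_zero]
    positivity
  · -- main case: S > 0
    have hkey : S • w = ∑ i ∈ P, ∑ j ∈ N, (α i * α j) • (x i - x j) := by
      have h1 : ∑ i ∈ P, ∑ j ∈ N, (α i * α j) • x i = S • ∑ i ∈ P, α i • x i := by
        rw [Finset.smul_sum]
        refine Finset.sum_congr rfl fun i _ => ?_
        rw [← Finset.sum_smul, ← Finset.mul_sum, ← heq, smul_smul, mul_comm]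
      have h2 : ∑ i ∈ P, ∑ j ∈ N, (α i * α j) • x j = S • ∑ j ∈ N, α j • x j := by
        rw [Finset.sum_comm, Finset.smul_sum]
        refine Finset.sum_congr rfl fun j _ => ?_
        rw [← Finset.sum_smul, ← Finset.sum_mul, smul_smul]
      calc S • w = S • ∑ i ∈ P, α i • x i - S • ∑ j ∈ N, α j • x j := by
            rw [hw, smul_sub]
        _ = ∑ i ∈ P, ∑ j ∈ N, ((α i * α j) • x i - (α i * α j) • x j) := by
            rw [← h1, ← h2, ← Finset.sum_sub_distrib]
            exact Finset.sum_congr rfl fun i _ => (Finset.sum_sub_distrib _ _).symm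
        _ = ∑ i ∈ P, ∑ j ∈ N, (α i * α j) • (x i - x j) := by
            refine Finset.sum_congr rfl fun i _ => Finset.sum_congr rfl fun j _ => ?_
            rw [smul_sub]
    have hnorm : S * ‖w‖ ≤ S * (S * D) := by
      have h1 : ‖S • w‖ = S * ‖w‖ := by
        rw [norm_smul, Real.norm_eq_abs, abs_of_pos hSpos]
      calc S * ‖w‖ = ‖S • w‖ := h1.symm
        _ ≤ ∑ i ∈ P, ∑ j ∈ N, ‖(α i * α j) • (x i - x j)‖ := by
            rw [hkey]
            exact (norm_sum_le _ _).trans (Finset.sum_le_sum fun i _ => norm_sum_le _ _)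
        _ ≤ ∑ i ∈ P, ∑ j ∈ N, (α i * α j) * D := by
            refine Finset.sum_le_sum fun i hi => Finset.sum_le_sum fun j hj => ?_
            have hi' : y i = 1 := by simpa [hP, posSet] using hi
            have hj' : y j = -1 := by simpa [hN, negSet] using hj
            rw [norm_smul, Real.norm_eq_abs, abs_of_nonneg (mul_nonneg (hbox i).1 (hbox j).1)]
            exact mul_le_mul_of_nonneg_left (hDub i j hi' hj')
              (mul_nonneg (hbox i).1 (hbox j).1)
        _ = S * (S * D) := by
            have e1 : ∑ i ∈ P, ∑ j ∈ N, α i * α j * D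
                = (∑ i ∈ P, ∑ j ∈ N, α i * α j) * D := by
              rw [Finset.sum_mul]
              exact Finset.sum_congr rfl fun i _ => (Finset.sum_mul _ _ _).symm
            rw [e1, ← Finset.sum_mul_sum, ← hS, ← heq]
            ring
    have hwle : ‖w‖ ≤ S * D := le_of_mul_le_mul_left hnorm hSpos
    calc ‖w‖ ≤ S * D := hwle
      _ ≤ ((P.card : ℝ) * C) * D := mul_le_mul_of_nonneg_right hSle hD0
      _ = (P.card : ℝ) * C * D := by ring
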